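/- Let a < b be real numbers and let X be a random variable taking values in [a,b] with mean μ satisfying l ≤ μ ≤ u, where a ≤ l ≤ u ≤ b. Let θ_u = (u−a)/(b−a). If s ≥ 0 satisfies θ_u ≤ 1/(1 + exp(s(b−a))), then E[exp(s(X−μ))] ≤ exp((s²(b−a)²/2) · φ''_{θ_u}(s(b−a))), where φ''_θ(r) = θ(1−θ)e^r / (1−θ+θe^r)². -/

import Mathlib

open MeasureTheory

/-- `φ''_θ(r) = θ(1-θ)e^r / (1-θ+θe^r)^2`, the second derivative of
`φ_θ(r) = -θr + log(1-θ+θe^r)`. -/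
noncomputable def phiSecond (θ r : ℝ) : ℝ :=
  θ * (1 - θ) * Real.exp r / (1 - θ + θ * Real.exp r) ^ 2


lemma phiSecond_mono {θ θu x r : ℝ} (hθ0 : 0 ≤ θ) (hθ : θ ≤ θu)
    (hx0 : 0 ≤ x) (hxr : x ≤ r) (hθu : θu ≤ 1 / (1 + Real.exp r)) :
    phiSecond θ x ≤ phiSecond θu r := by
  have hr0 : 0 ≤ r := hx0.trans hxr
  have her : (1:ℝ) ≤ Real.exp r := Real.one_le_exp hr0
  have hex : (1:ℝ) ≤ Real.exp x := Real.one_le_exp hx0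
  have hexr : Real.exp x ≤ Real.exp r := Real.exp_le_exp.2 hxr
  have hepos : (0:ℝ) < 1 + Real.exp r := by linarith
  have hθu1 : θu * (1 + Real.exp r) ≤ 1 := by
    have := (le_div_iff₀ hepos).1 hθu
    linarith
  have hθu2 : θu ≤ 1/2 := by nlinarith
  have hθ2 : θ ≤ 1/2 := hθ.trans hθu2
  have hθu0 : 0 ≤ θu := hθ0.trans hθ
  set Dx := 1 - θ + θ * Real.exp x with hDxdef
  set Dr := 1 - θu + θu * Real.exp r with hDrdef
  have hDx : 0 < Dx := by nlinarith
  have hDr : 0 < Dr := by nlinarith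
  set p := θ * Real.exp x / Dx with hpdef
  set q := θu * Real.exp r / Dr with hqdef
  have hp0 : 0 ≤ p := by positivity
  have hpq : p ≤ q := by
    rw [hpdef, hqdef, div_le_div_iff₀ hDx hDr]
    have h1 : θ * Real.exp x ≤ θu * Real.exp r := by nlinarith
    have h2 : θ * Real.exp x * (1 - θu) ≤ θu * Real.exp r * (1 - θ) :=
      mul_le_mul h1 (by linarith) (by linarith) (by positivity)
    rw [hDxdef, hDrdef]
    nlinarith
  have hq2 : q ≤ 1/2 := by
    rw [hqdef, div_le_iff₀ hDr]
    nlinarith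
  have e1 : phiSecond θ x = p * (1 - p) := by
    rw [phiSecond, hpdef, ← hDxdef]
    field_simp
    ring
  have e2 : phiSecond θu r = q * (1 - q) := by
    rw [phiSecond, hqdef, ← hDrdef]
    field_simp
    ring
  rw [e1, e2]
  nlinarith [mul_nonneg (sub_nonneg.2 hpq) (by linarith : (0:ℝ) ≤ 1 - p - q)]

lemma core_ineq {θ θu r : ℝ} (hθ0 : 0 ≤ θ) (hθ : θ ≤ θu) (hr : 0 ≤ r)
    (hθu : θu ≤ 1 / (1 + Real.exp r)) :
    -θ * r + Real.log (1 - θ + θ * Real.exp r) ≤ r ^ 2 / 2 * phiSecond θu r := by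
  have her : (1:ℝ) ≤ Real.exp r := Real.one_le_exp hr
  have hepos : (0:ℝ) < 1 + Real.exp r := by linarith
  have hθ2 : θ ≤ 1/2 := by
    have h2 : (1:ℝ) / (1 + Real.exp r) ≤ 1/2 := by
      rw [div_le_div_iff₀ hepos (by norm_num)]; linarith
    linarith [hθ.trans (hθu.trans h2)]
  set c := phiSecond θu r with hc
  have hD : ∀ y : ℝ, 0 ≤ y → 0 < 1 - θ + θ * Real.exp y := by
    intro y hy
    have : (1:ℝ) ≤ Real.exp y := Real.one_le_exp hy
    nlinarith
  set f : ℝ → ℝ := fun y => y ^ 2 / 2 * c + θ * y - Real.log (1 - θ + θ * Real.exp y)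
    with hf
  set f' : ℝ → ℝ := fun y => y * c + θ - θ * Real.exp y / (1 - θ + θ * Real.exp y)
    with hf'
  have hDd : ∀ y : ℝ, HasDerivAt (fun z => 1 - θ + θ * Real.exp z) (θ * Real.exp y) y := by
    intro y
    simpa using ((Real.hasDerivAt_exp y).const_mul θ).const_add (1 - θ)
  have hderiv1 : ∀ y : ℝ, 0 ≤ y → HasDerivAt f (f' y) y := by
    intro y hy
    have h1 : HasDerivAt (fun z : ℝ => z ^ 2 / 2 * c + θ * z) (y * c + θ) y := by
      have := (((hasDerivAt_pow 2 y).div_const 2).mul_const c).add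
        ((hasDerivAt_id y).const_mul θ)
      refine this.congr_deriv ?_
      push_cast; ring
    have h2 : HasDerivAt (fun z => Real.log (1 - θ + θ * Real.exp z))
        (θ * Real.exp y / (1 - θ + θ * Real.exp y)) y :=
      (hDd y).log (ne_of_gt (hD y hy))
    exact h1.sub h2
  have hderiv2 : ∀ y : ℝ, 0 ≤ y → HasDerivAt f' (c - phiSecond θ y) y := by
    intro y hy
    have hne := ne_of_gt (hD y hy)
    have h1 : HasDerivAt (fun z : ℝ => z * c + θ) c y := by
      simpa using ((hasDerivAt_id y).mul_const c).add_const θ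
    have h2 : HasDerivAt (fun z => θ * Real.exp z / (1 - θ + θ * Real.exp z))
        ((θ * Real.exp y * (1 - θ + θ * Real.exp y) -
          θ * Real.exp y * (θ * Real.exp y)) / (1 - θ + θ * Real.exp y) ^ 2) y :=
      ((Real.hasDerivAt_exp y).const_mul θ).div (hDd y) hne
    have := h1.sub h2
    refine this.congr_deriv ?_
    rw [phiSecond]
    field_simp
    ring
  -- f' is monotone on [0, r]
  have hmono1 : MonotoneOn f' (Set.Icc 0 r) := by
    apply monotoneOn_of_deriv_nonneg (convex_Icc 0 r)
    · exact fun y hy => ((hderiv2 y hy.1).continuousAt).continuousWithinAt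
    · intro y hy
      rw [interior_Icc] at hy
      exact ((hderiv2 y hy.1.le).differentiableAt).differentiableWithinAt
    · intro y hy
      rw [interior_Icc] at hy
      rw [(hderiv2 y hy.1.le).deriv]
      have := phiSecond_mono hθ0 hθ hy.1.le hy.2.le hθu
      linarith
  have hf'0 : f' 0 = 0 := by
    simp [hf']
  have hf'nonneg : ∀ y ∈ Set.Icc (0:ℝ) r, 0 ≤ f' y := by
    intro y hy
    have := hmono1 (Set.left_mem_Icc.2 hr) hy hy.1
    rwa [hf'0] at this
  have hmono2 : MonotoneOn f (Set.Icc 0 r) := by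
    apply monotoneOn_of_deriv_nonneg (convex_Icc 0 r)
    · exact fun y hy => ((hderiv1 y hy.1).continuousAt).continuousWithinAt
    · intro y hy
      rw [interior_Icc] at hy
      exact ((hderiv1 y hy.1.le).differentiableAt).differentiableWithinAt
    · intro y hy
      rw [interior_Icc] at hy
      rw [(hderiv1 y hy.1.le).deriv]
      exact hf'nonneg y ⟨hy.1.le, hy.2.le⟩
  have h0r : f 0 ≤ f r := hmono2 (Set.left_mem_Icc.2 hr) (Set.right_mem_Icc.2 hr) hr
  have hf0 : f 0 = 0 := by simp [hf]
  rw [hf0] at h0r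
  simp only [hf] at h0r
  linarith

/-- MGF bound for a bounded random variable when `θ_u = (u-a)/(b-a)` satisfies
`θ_u ≤ 1/(1 + exp(s(b-a)))`. -/
theorem mgf_bound_low_theta
    {Ω : Type*} [MeasurableSpace Ω] (P : Measure Ω) [IsProbabilityMeasure P]
    (a b l u μ : ℝ) (hab : a < b) (hal : a ≤ l) (hlu : l ≤ u) (hub : u ≤ b)
    (X : Ω → ℝ) (hmeas : Measurable X)
    (hbdd : ∀ᵐ ω ∂P, X ω ∈ Set.Icc a b)
    (hmean : ∫ ω, X ω ∂P = μ)
    (hlμ : l ≤ μ) (hμu : μ ≤ u)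
    (s : ℝ) (hs : 0 ≤ s)
    (hθ : (u - a) / (b - a) ≤ 1 / (1 + Real.exp (s * (b - a)))) :
    ∫ ω, Real.exp (s * (X ω - μ)) ∂P ≤
      Real.exp (s ^ 2 * (b - a) ^ 2 / 2 * phiSecond ((u - a) / (b - a)) (s * (b - a))) := by
  have hba : (0:ℝ) < b - a := by linarith
  have hμab : a ≤ μ ∧ μ ≤ b := ⟨hal.trans hlμ, hμu.trans hub⟩
  set r : ℝ := s * (b - a) with hrdef
  set θm : ℝ := (μ - a) / (b - a) with hθmdef
  set θu : ℝ := (u - a) / (b - a) with hθudef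
  set A : ℝ := Real.exp (s * (a - μ)) with hAdef
  set B : ℝ := Real.exp (s * (b - μ)) with hBdef
  set c1 : ℝ := (b * A - a * B) / (b - a) with hc1def
  set c2 : ℝ := (B - A) / (b - a) with hc2def
  -- integrability
  have hXint : Integrable X P := by
    refine (integrable_const (max |a| |b|)).mono' hmeas.aestronglyMeasurable ?_
    exact hbdd.mono fun ω h => abs_le_max_abs_abs h.1 h.2
  have hexpint : Integrable (fun ω => Real.exp (s * (X ω - μ))) P := by
    refine (integrable_const B).mono'
      ((Real.measurable_exp.comp ((hmeas.sub_const μ).const_mul s)).aestronglyMeasurable) ?_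
    refine hbdd.mono fun ω h => ?_
    rw [Real.norm_eq_abs, abs_of_pos (Real.exp_pos _), hBdef]
    exact Real.exp_le_exp.2 (by nlinarith [h.2])
  have hRHSint : Integrable (fun ω => c1 + c2 * X ω) P :=
    (integrable_const c1).add (hXint.const_mul c2)
  -- pointwise bound via convexity
  have hkey : ∀ᵐ ω ∂P, Real.exp (s * (X ω - μ)) ≤ c1 + c2 * X ω := by
    refine hbdd.mono fun ω h => ?_
    set x := X ω with hxdef
    set lam : ℝ := (b - x) / (b - a) with hlamdef
    have hlam0 : 0 ≤ lam := div_nonneg (by linarith [h.2]) hba.le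
    have hlam1 : 0 ≤ 1 - lam := by
      rw [hlamdef, sub_nonneg, div_le_one hba]
      linarith [h.1]
    have hconv := convexOn_exp.2 (Set.mem_univ (s * (a - μ))) (Set.mem_univ (s * (b - μ)))
      hlam0 hlam1 (by ring)
    have harg : lam • (s * (a - μ)) + (1 - lam) • (s * (b - μ)) = s * (x - μ) := by
      rw [smul_eq_mul, smul_eq_mul, hlamdef]
      field_simp
      ring
    rw [harg] at hconv
    refine hconv.trans (le_of_eq ?_)
    rw [smul_eq_mul, smul_eq_mul, hlamdef, hc1def, hc2def]
    field_simp
    ring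
  have hint : ∫ ω, Real.exp (s * (X ω - μ)) ∂P ≤ ∫ ω, (c1 + c2 * X ω) ∂P :=
    integral_mono_ae hexpint hRHSint hkey
  have hval : ∫ ω, (c1 + c2 * X ω) ∂P = c1 + c2 * μ := by
    rw [integral_add (integrable_const c1) (hXint.const_mul c2), integral_const,
      integral_const_mul, hmean]
    simp
  -- identify c1 + c2 * μ with exp(φ_{θm}(r))
  have hD : (0:ℝ) < 1 - θm + θm * Real.exp r := by
    have h1 : 0 ≤ θm := div_nonneg (by linarith [hμab.1]) hba.le
    have h2 : θm ≤ 1 := by rw [hθmdef, div_le_one hba]; linarith [hμab.2]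
    nlinarith [Real.exp_pos r, Real.one_le_exp (by positivity : (0:ℝ) ≤ r)]
  have hident : c1 + c2 * μ = Real.exp (-θm * r + Real.log (1 - θm + θm * Real.exp r)) := by
    rw [Real.exp_add, Real.exp_log hD]
    have e1 : -θm * r = s * (a - μ) := by rw [hθmdef, hrdef]; field_simp; ring
    have e2 : Real.exp (-θm * r) * (θm * Real.exp r) = θm * Real.exp (s * (b - μ)) := by
      rw [← mul_assoc, mul_comm (Real.exp (-θm * r)) θm, mul_assoc, ← Real.exp_add, e1]
      ring_nf
      rw [hrdef]; ring_nf
    rw [mul_add, e2, e1, hc1def, hc2def, hAdef, hBdef, hθmdef]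
    field_simp
    ring
  -- apply the core inequality
  have hθm0 : 0 ≤ θm := div_nonneg (by linarith [hμab.1]) hba.le
  have hθmθu : θm ≤ θu := by
    rw [hθmdef, hθudef]
    gcongr <;> linarith
  have hr0 : 0 ≤ r := by positivity
  have hcore := core_ineq hθm0 hθmθu hr0 hθ
  calc ∫ ω, Real.exp (s * (X ω - μ)) ∂P ≤ c1 + c2 * μ := hval ▸ hint
    _ = Real.exp (-θm * r + Real.log (1 - θm + θm * Real.exp r)) := hident
    _ ≤ Real.exp (r ^ 2 / 2 * phiSecond θu r) := Real.exp_le_exp.2 hcore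
    _ = Real.exp (s ^ 2 * (b - a) ^ 2 / 2 * phiSecond θu r) := by rw [hrdef]; ring_nf
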